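/- Fix T > 0 and real parameters α1, α2, σ11, σ12, σ21, σ22 with Δ := (σ11−σ21)² + (σ12−σ22)² > 0. Then there exists exactly one continuous function k1 : [0,T] → ℝ satisfying the integral equation for k1, i.e. k1(t) = (1/Δ)·{ (α1−α2)·( exp( −∫_t^T [ (σ21 + k1(s)(σ11−σ21))² + (σ22 + k1(s)(σ12−σ22))² ] ds ) − 1 ) − σ21(σ11−σ21) − σ22(σ12−σ22) } for all t ∈ [0,T]. -/

import Mathlib

open Set MeasureTheory intervalIntegral



/-- The right-hand side of the integral equation for the feedback coefficient `k1` of the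
equilibrium mean--variance portfolio without a risk-free asset. -/
noncomputable def k1RHS (T α1 α2 σ11 σ12 σ21 σ22 : ℝ) (k : ℝ → ℝ) (t : ℝ) : ℝ :=
  (1 / ((σ11 - σ21) ^ 2 + (σ12 - σ22) ^ 2)) *
    ((α1 - α2) *
        (Real.exp
            (-∫ s in t..T,
                ((σ21 + k s * (σ11 - σ21)) ^ 2 + (σ22 + k s * (σ12 - σ22)) ^ 2)) -
          1) -
      σ21 * (σ11 - σ21) - σ22 * (σ12 - σ22))

namespace K1Aux

lemma exp_neg_lip {x y : ℝ} (hx : 0 ≤ x) (hy : 0 ≤ y) :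
    |Real.exp (-x) - Real.exp (-y)| ≤ |x - y| := by
  wlog h : x ≤ y generalizing x y with H
  · rw [abs_sub_comm, abs_sub_comm x y]; exact H hy hx (le_of_not_ge h)
  have h1 : Real.exp (-y) ≤ Real.exp (-x) := Real.exp_le_exp.2 (by linarith)
  have h2 : Real.exp (-x) ≤ 1 := Real.exp_le_one_iff.2 (by linarith)
  have h3 : Real.exp (-x) - Real.exp (-y) = Real.exp (-x) * (1 - Real.exp (x - y)) := by
    rw [mul_sub, mul_one, ← Real.exp_add]; ring_nf
  have h4 : (x - y) + 1 ≤ Real.exp (x - y) := Real.add_one_le_exp _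
  have h5 : 0 < Real.exp (-x) := Real.exp_pos _
  rw [abs_of_nonneg (by linarith), abs_of_nonpos (by linarith)]
  nlinarith [Real.exp_pos (x - y)]

variable (T α1 α2 σ11 σ12 σ21 σ22 : ℝ)

/-- the quadratic integrand -/
noncomputable def fQ (x : ℝ) : ℝ :=
  (σ21 + x * (σ11 - σ21)) ^ 2 + (σ22 + x * (σ12 - σ22)) ^ 2

noncomputable def Δ : ℝ := (σ11 - σ21) ^ 2 + (σ12 - σ22) ^ 2
noncomputable def cc : ℝ := σ21 * (σ11 - σ21) + σ22 * (σ12 - σ22)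
noncomputable def M : ℝ := (|α1 - α2| + |cc σ11 σ12 σ21 σ22|) / Δ σ11 σ12 σ21 σ22
noncomputable def Lf : ℝ :=
  2 * Δ σ11 σ12 σ21 σ22 * M α1 α2 σ11 σ12 σ21 σ22 + 2 * |cc σ11 σ12 σ21 σ22|
noncomputable def CC : ℝ :=
  |α1 - α2| / Δ σ11 σ12 σ21 σ22 * Lf α1 α2 σ11 σ12 σ21 σ22

lemma fQ_nonneg (x : ℝ) : 0 ≤ fQ σ11 σ12 σ21 σ22 x := by unfold fQ; positivity

lemma k1RHS_eq (k : ℝ → ℝ) (t : ℝ) :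
    k1RHS T α1 α2 σ11 σ12 σ21 σ22 k t =
      (1 / Δ σ11 σ12 σ21 σ22) *
        ((α1 - α2) *
            (Real.exp (-(∫ s in t..T, fQ σ11 σ12 σ21 σ22 (k s))) - 1) -
          cc σ11 σ12 σ21 σ22) := by
  simp only [k1RHS, Δ, cc, fQ]; ring

variable (hΔ : 0 < Δ σ11 σ12 σ21 σ22)

lemma M_nonneg : 0 ≤ M α1 α2 σ11 σ12 σ21 σ22 := by
  unfold M Δ; positivity

lemma Lf_nonneg : 0 ≤ Lf α1 α2 σ11 σ12 σ21 σ22 := by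
  have h1 := M_nonneg α1 α2 σ11 σ12 σ21 σ22
  have h2 : (0:ℝ) ≤ Δ σ11 σ12 σ21 σ22 := by unfold Δ; positivity
  unfold Lf; positivity

lemma CC_nonneg : 0 ≤ CC α1 α2 σ11 σ12 σ21 σ22 := by
  have h1 := Lf_nonneg α1 α2 σ11 σ12 σ21 σ22
  have h2 : (0:ℝ) ≤ Δ σ11 σ12 σ21 σ22 := by unfold Δ; positivity
  unfold CC; positivity

include hΔ in
lemma fQ_lip {x y : ℝ} (hx : |x| ≤ M α1 α2 σ11 σ12 σ21 σ22)
    (hy : |y| ≤ M α1 α2 σ11 σ12 σ21 σ22) :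
    |fQ σ11 σ12 σ21 σ22 x - fQ σ11 σ12 σ21 σ22 y| ≤
      Lf α1 α2 σ11 σ12 σ21 σ22 * |x - y| := by
  have hdiff : fQ σ11 σ12 σ21 σ22 x - fQ σ11 σ12 σ21 σ22 y =
      (x - y) * (Δ σ11 σ12 σ21 σ22 * (x + y) + 2 * cc σ11 σ12 σ21 σ22) := by
    unfold fQ Δ cc; ring
  rw [hdiff, abs_mul, mul_comm]
  apply mul_le_mul_of_nonneg_right _ (abs_nonneg _)
  have h1 : |Δ σ11 σ12 σ21 σ22 * (x + y) + 2 * cc σ11 σ12 σ21 σ22| ≤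
      Δ σ11 σ12 σ21 σ22 * (|x| + |y|) + 2 * |cc σ11 σ12 σ21 σ22| := by
    calc |Δ σ11 σ12 σ21 σ22 * (x + y) + 2 * cc σ11 σ12 σ21 σ22|
        ≤ |Δ σ11 σ12 σ21 σ22 * (x + y)| + |2 * cc σ11 σ12 σ21 σ22| := abs_add_le _ _
      _ ≤ Δ σ11 σ12 σ21 σ22 * (|x| + |y|) + 2 * |cc σ11 σ12 σ21 σ22| := by
          rw [abs_mul, abs_mul, abs_of_pos hΔ, abs_of_pos (by norm_num : (0:ℝ) < 2)]
          gcongr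
          exact abs_add_le _ _
  unfold Lf
  have : Δ σ11 σ12 σ21 σ22 * (|x| + |y|) ≤
      2 * Δ σ11 σ12 σ21 σ22 * M α1 α2 σ11 σ12 σ21 σ22 := by nlinarith
  linarith

include hΔ in
/-- a priori bound on the RHS, valid for any `k`. -/
lemma rhs_bound (k : ℝ → ℝ) {t : ℝ} (ht : t ≤ T) :
    |k1RHS T α1 α2 σ11 σ12 σ21 σ22 k t| ≤ M α1 α2 σ11 σ12 σ21 σ22 := by
  rw [k1RHS_eq]
  set I := ∫ s in t..T, fQ σ11 σ12 σ21 σ22 (k s) with hI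
  have hI0 : 0 ≤ I := intervalIntegral.integral_nonneg ht
    (fun u _ => fQ_nonneg σ11 σ12 σ21 σ22 (k u))
  set E := Real.exp (-I) with hE
  have hE1 : E ≤ 1 := Real.exp_le_one_iff.2 (by linarith)
  have hE0 : 0 < E := Real.exp_pos _
  have h1 : |(α1 - α2) * (E - 1)| ≤ |α1 - α2| := by
    rw [abs_mul]
    exact mul_le_of_le_one_right (abs_nonneg _) (by rw [abs_le]; constructor <;> linarith)
  have h2 : |(α1 - α2) * (E - 1) - cc σ11 σ12 σ21 σ22| ≤
      |α1 - α2| + |cc σ11 σ12 σ21 σ22| :=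
    le_trans (abs_sub _ _) (by linarith)
  have hd : 0 < (1 / Δ σ11 σ12 σ21 σ22) := one_div_pos.2 hΔ
  calc |1 / Δ σ11 σ12 σ21 σ22 * ((α1 - α2) * (E - 1) - cc σ11 σ12 σ21 σ22)|
      = 1 / Δ σ11 σ12 σ21 σ22 * |(α1 - α2) * (E - 1) - cc σ11 σ12 σ21 σ22| := by
        rw [abs_mul, abs_of_pos hd]
    _ ≤ 1 / Δ σ11 σ12 σ21 σ22 * (|α1 - α2| + |cc σ11 σ12 σ21 σ22|) :=
        mul_le_mul_of_nonneg_left h2 hd.le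
    _ = M α1 α2 σ11 σ12 σ21 σ22 := by rw [M]; ring

include hΔ in
lemma step_est {k l : ℝ → ℝ} (hkc : Continuous k) (hlc : Continuous l)
    (hk : ∀ s, |k s| ≤ M α1 α2 σ11 σ12 σ21 σ22)
    (hl : ∀ s, |l s| ≤ M α1 α2 σ11 σ12 σ21 σ22)
    {β : ℝ → ℝ} (hβc : Continuous β)
    {t : ℝ} (ht : t ≤ T)
    (hβ : ∀ s ∈ Icc t T, |k s - l s| ≤ β s) :
    |k1RHS T α1 α2 σ11 σ12 σ21 σ22 k t - k1RHS T α1 α2 σ11 σ12 σ21 σ22 l t| ≤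
      |α1 - α2| / Δ σ11 σ12 σ21 σ22 *
        ∫ s in t..T, Lf α1 α2 σ11 σ12 σ21 σ22 * β s := by
  have hfk : Continuous fun s => fQ σ11 σ12 σ21 σ22 (k s) := by unfold fQ; fun_prop
  have hfl : Continuous fun s => fQ σ11 σ12 σ21 σ22 (l s) := by unfold fQ; fun_prop
  have hik : IntervalIntegrable (fun s => fQ σ11 σ12 σ21 σ22 (k s)) volume t T :=
    hfk.intervalIntegrable t T
  have hil : IntervalIntegrable (fun s => fQ σ11 σ12 σ21 σ22 (l s)) volume t T :=
    hfl.intervalIntegrable t T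
  set Ik := ∫ s in t..T, fQ σ11 σ12 σ21 σ22 (k s) with hIk
  set Il := ∫ s in t..T, fQ σ11 σ12 σ21 σ22 (l s) with hIl
  have hIk0 : 0 ≤ Ik := intervalIntegral.integral_nonneg ht
    (fun u _ => fQ_nonneg σ11 σ12 σ21 σ22 (k u))
  have hIl0 : 0 ≤ Il := intervalIntegral.integral_nonneg ht
    (fun u _ => fQ_nonneg σ11 σ12 σ21 σ22 (l u))
  have hdiff : k1RHS T α1 α2 σ11 σ12 σ21 σ22 k t - k1RHS T α1 α2 σ11 σ12 σ21 σ22 l t =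
      (1 / Δ σ11 σ12 σ21 σ22) * ((α1 - α2) * (Real.exp (-Ik) - Real.exp (-Il))) := by
    rw [k1RHS_eq, k1RHS_eq, ← hIk, ← hIl]; ring
  have hII : |Ik - Il| ≤ ∫ s in t..T, Lf α1 α2 σ11 σ12 σ21 σ22 * β s := by
    have h1 : Ik - Il = ∫ s in t..T,
        (fQ σ11 σ12 σ21 σ22 (k s) - fQ σ11 σ12 σ21 σ22 (l s)) :=
      (intervalIntegral.integral_sub hik hil).symm
    rw [h1]
    calc |∫ s in t..T, (fQ σ11 σ12 σ21 σ22 (k s) - fQ σ11 σ12 σ21 σ22 (l s))|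
        ≤ ∫ s in t..T, |fQ σ11 σ12 σ21 σ22 (k s) - fQ σ11 σ12 σ21 σ22 (l s)| :=
          intervalIntegral.abs_integral_le_integral_abs ht
      _ ≤ ∫ s in t..T, Lf α1 α2 σ11 σ12 σ21 σ22 * β s := by
          apply intervalIntegral.integral_mono_on ht ((hfk.sub hfl).abs.intervalIntegrable t T)
            ((continuous_const.mul hβc).intervalIntegrable t T)
          intro s hs
          calc |fQ σ11 σ12 σ21 σ22 (k s) - fQ σ11 σ12 σ21 σ22 (l s)|
              ≤ Lf α1 α2 σ11 σ12 σ21 σ22 * |k s - l s| :=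
                fQ_lip α1 α2 σ11 σ12 σ21 σ22 hΔ (hk s) (hl s)
            _ ≤ Lf α1 α2 σ11 σ12 σ21 σ22 * β s :=
                mul_le_mul_of_nonneg_left (hβ s hs) (Lf_nonneg α1 α2 σ11 σ12 σ21 σ22)
  calc |k1RHS T α1 α2 σ11 σ12 σ21 σ22 k t - k1RHS T α1 α2 σ11 σ12 σ21 σ22 l t|
      = 1 / Δ σ11 σ12 σ21 σ22 * (|α1 - α2| * |Real.exp (-Ik) - Real.exp (-Il)|) := by
        rw [hdiff, abs_mul, abs_mul, abs_of_pos (one_div_pos.2 hΔ)]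
    _ ≤ 1 / Δ σ11 σ12 σ21 σ22 * (|α1 - α2| * |Ik - Il|) := by
        apply mul_le_mul_of_nonneg_left _ (le_of_lt (one_div_pos.2 hΔ))
        exact mul_le_mul_of_nonneg_left (exp_neg_lip hIk0 hIl0) (abs_nonneg _)
    _ ≤ 1 / Δ σ11 σ12 σ21 σ22 * (|α1 - α2| *
          ∫ s in t..T, Lf α1 α2 σ11 σ12 σ21 σ22 * β s) := by
        apply mul_le_mul_of_nonneg_left _ (le_of_lt (one_div_pos.2 hΔ))
        exact mul_le_mul_of_nonneg_left hII (abs_nonneg _)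
    _ = |α1 - α2| / Δ σ11 σ12 σ21 σ22 *
          ∫ s in t..T, Lf α1 α2 σ11 σ12 σ21 σ22 * β s := by ring

lemma continuous_rhs {k : ℝ → ℝ} (hkc : Continuous k) :
    Continuous fun t => k1RHS T α1 α2 σ11 σ12 σ21 σ22 k t := by
  have hg : Continuous fun s => fQ σ11 σ12 σ21 σ22 (k s) := by unfold fQ; fun_prop
  have hint : ∀ a b : ℝ,
      IntervalIntegrable (fun s => fQ σ11 σ12 σ21 σ22 (k s)) volume a b :=
    fun a b => hg.intervalIntegrable a b
  have hF : Continuous fun t => ∫ s in t..T, fQ σ11 σ12 σ21 σ22 (k s) := by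
    have h1 : Continuous fun t => ∫ s in (0:ℝ)..t, fQ σ11 σ12 σ21 σ22 (k s) :=
      intervalIntegral.continuous_primitive hint 0
    have h2 : (fun t => ∫ s in t..T, fQ σ11 σ12 σ21 σ22 (k s)) =
        fun t => (∫ s in (0:ℝ)..T, fQ σ11 σ12 σ21 σ22 (k s)) -
          ∫ s in (0:ℝ)..t, fQ σ11 σ12 σ21 σ22 (k s) := by
      funext t
      have := intervalIntegral.integral_add_adjacent_intervals (hint 0 t) (hint t T)
      linarith
    rw [h2]; exact continuous_const.sub h1
  have h3 : (fun t => k1RHS T α1 α2 σ11 σ12 σ21 σ22 k t) =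
      fun t => (1 / Δ σ11 σ12 σ21 σ22) *
        ((α1 - α2) *
            (Real.exp (-(∫ s in t..T, fQ σ11 σ12 σ21 σ22 (k s))) - 1) -
          cc σ11 σ12 σ21 σ22) := by
    funext t; exact k1RHS_eq T α1 α2 σ11 σ12 σ21 σ22 k t
  rw [h3]
  exact continuous_const.mul
    ((continuous_const.mul ((Real.continuous_exp.comp hF.neg).sub continuous_const)).sub
      continuous_const)

noncomputable def extIcc (hT0 : (0:ℝ) ≤ T) (u : C(Icc (0:ℝ) T, ℝ)) : ℝ → ℝ :=
  fun t => u (projIcc 0 T hT0 t)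

lemma continuous_extIcc (hT0 : (0:ℝ) ≤ T) (u : C(Icc (0:ℝ) T, ℝ)) :
    Continuous (extIcc T hT0 u) :=
  u.continuous.comp continuous_projIcc

lemma extIcc_of_mem (hT0 : (0:ℝ) ≤ T) (u : C(Icc (0:ℝ) T, ℝ)) {s : ℝ}
    (hs : s ∈ Icc (0:ℝ) T) : extIcc T hT0 u s = u ⟨s, hs⟩ := by
  rw [extIcc, projIcc_of_mem hT0 hs]

noncomputable def Sball : Set C(Icc (0:ℝ) T, ℝ) :=
  Metric.closedBall 0 (M α1 α2 σ11 σ12 σ21 σ22)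

lemma mem_Sball_iff (u : C(Icc (0:ℝ) T, ℝ)) :
    u ∈ Sball T α1 α2 σ11 σ12 σ21 σ22 ↔
      ∀ x : Icc (0:ℝ) T, |u x| ≤ M α1 α2 σ11 σ12 σ21 σ22 := by
  rw [Sball, Metric.mem_closedBall,
    ContinuousMap.dist_le (M_nonneg α1 α2 σ11 σ12 σ21 σ22)]
  simp [Real.dist_eq]

noncomputable def PhiC (hT0 : (0:ℝ) ≤ T) (u : C(Icc (0:ℝ) T, ℝ)) :
    C(Icc (0:ℝ) T, ℝ) :=
  ⟨fun x => k1RHS T α1 α2 σ11 σ12 σ21 σ22 (extIcc T hT0 u) x,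
    (continuous_rhs T α1 α2 σ11 σ12 σ21 σ22
      (continuous_extIcc T hT0 u)).comp continuous_subtype_val⟩

noncomputable def PhiS (hT0 : (0:ℝ) ≤ T) (hΔ' : 0 < Δ σ11 σ12 σ21 σ22)
    (u : ↥(Sball T α1 α2 σ11 σ12 σ21 σ22)) : ↥(Sball T α1 α2 σ11 σ12 σ21 σ22) :=
  ⟨PhiC T α1 α2 σ11 σ12 σ21 σ22 hT0 u.1, by
    rw [mem_Sball_iff]
    intro x
    exact rhs_bound T α1 α2 σ11 σ12 σ21 σ22 hΔ' (extIcc T hT0 u.1) x.2.2⟩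

lemma integral_T_sub_pow (x : ℝ) (n : ℕ) :
    ∫ s in x..T, (T - s) ^ n = (T - x) ^ (n + 1) / ((n : ℝ) + 1) := by
  have h := intervalIntegral.integral_comp_sub_left (a := x) (b := T) (fun y => y ^ n) T
  rw [h, sub_self, integral_pow, zero_pow (Nat.succ_ne_zero n), sub_zero]

include hΔ in
lemma iter_est (hT0 : (0:ℝ) ≤ T) (n : ℕ)
    (u v : ↥(Sball T α1 α2 σ11 σ12 σ21 σ22)) (x : Icc (0:ℝ) T) :
    |(((PhiS T α1 α2 σ11 σ12 σ21 σ22 hT0 hΔ)^[n] u).1 : C(Icc (0:ℝ) T, ℝ)) x -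
        ((PhiS T α1 α2 σ11 σ12 σ21 σ22 hT0 hΔ)^[n] v).1 x| ≤
      CC α1 α2 σ11 σ12 σ21 σ22 ^ n * (T - x) ^ n / n.factorial * dist u v := by
  induction n generalizing x with
  | zero =>
    simp only [Function.iterate_zero, id_eq, pow_zero, Nat.factorial_zero, Nat.cast_one,
      mul_one, one_mul, div_one]
    calc |u.1 x - v.1 x| = dist (u.1 x) (v.1 x) := (Real.dist_eq _ _).symm
      _ ≤ dist u.1 v.1 := ContinuousMap.dist_apply_le_dist x
      _ = dist u v := (Subtype.dist_eq u v).symm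
  | succ n ih =>
    rw [Function.iterate_succ_apply', Function.iterate_succ_apply']
    set p := (PhiS T α1 α2 σ11 σ12 σ21 σ22 hT0 hΔ)^[n] u with hp
    set q := (PhiS T α1 α2 σ11 σ12 σ21 σ22 hT0 hΔ)^[n] v with hq
    set D := dist u v with hD
    set c0 := CC α1 α2 σ11 σ12 σ21 σ22 ^ n / n.factorial * D with hc0
    have hpm : ∀ s, |extIcc T hT0 p.1 s| ≤ M α1 α2 σ11 σ12 σ21 σ22 := fun s =>
      (mem_Sball_iff T α1 α2 σ11 σ12 σ21 σ22 p.1).1 p.2 (projIcc 0 T hT0 s)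
    have hqm : ∀ s, |extIcc T hT0 q.1 s| ≤ M α1 α2 σ11 σ12 σ21 σ22 := fun s =>
      (mem_Sball_iff T α1 α2 σ11 σ12 σ21 σ22 q.1).1 q.2 (projIcc 0 T hT0 s)
    have hβc : Continuous fun s : ℝ => c0 * (T - s) ^ n := by fun_prop
    have hβ : ∀ s ∈ Icc (x:ℝ) T,
        |extIcc T hT0 p.1 s - extIcc T hT0 q.1 s| ≤ c0 * (T - s) ^ n := by
      intro s hs
      have hmem : s ∈ Icc (0:ℝ) T := ⟨le_trans x.2.1 hs.1, hs.2⟩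
      rw [extIcc_of_mem T hT0 p.1 hmem, extIcc_of_mem T hT0 q.1 hmem]
      refine le_trans (ih ⟨s, hmem⟩) (le_of_eq ?_)
      ring
    have hstep := step_est T α1 α2 σ11 σ12 σ21 σ22 hΔ
      (continuous_extIcc T hT0 p.1) (continuous_extIcc T hT0 q.1) hpm hqm hβc x.2.2 hβ
    have hInt : (∫ s in (x:ℝ)..T, Lf α1 α2 σ11 σ12 σ21 σ22 * (c0 * (T - s) ^ n)) =
        Lf α1 α2 σ11 σ12 σ21 σ22 * (c0 * ((T - (x:ℝ)) ^ (n + 1) / ((n : ℝ) + 1))) := by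
      rw [intervalIntegral.integral_const_mul, intervalIntegral.integral_const_mul,
        integral_T_sub_pow]
    have hgoal : |(PhiS T α1 α2 σ11 σ12 σ21 σ22 hT0 hΔ p).1 x -
          (PhiS T α1 α2 σ11 σ12 σ21 σ22 hT0 hΔ q).1 x| =
        |k1RHS T α1 α2 σ11 σ12 σ21 σ22 (extIcc T hT0 p.1) x -
          k1RHS T α1 α2 σ11 σ12 σ21 σ22 (extIcc T hT0 q.1) x| := rfl
    rw [hgoal]
    refine le_trans hstep (le_of_eq ?_)
    rw [hInt, hc0, CC, Nat.factorial_succ]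
    have h1 : ((n.factorial : ℝ)) ≠ 0 := Nat.cast_ne_zero.2 (Nat.factorial_ne_zero n)
    have h2 : ((n : ℝ) + 1) ≠ 0 := by positivity
    have h3 : Δ σ11 σ12 σ21 σ22 ≠ 0 := hΔ.ne'
    push_cast
    field_simp
    have h4 : Δ σ11 σ12 σ21 σ22 * (Δ σ11 σ12 σ21 σ22)⁻¹ = 1 := mul_inv_cancel₀ h3
    linear_combination (-(|α1 - α2| * |α1 - α2| ^ n * Lf α1 α2 σ11 σ12 σ21 σ22 *
      Lf α1 α2 σ11 σ12 σ21 σ22 ^ n * (Δ σ11 σ12 σ21 σ22)⁻¹ ^ n * D * (T - (x:ℝ)) *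
      (T - (x:ℝ)) ^ n)) * h4

end K1Aux

open K1Aux in
/-- There exists exactly one continuous function `k1 : [0,T] → ℝ` satisfying the integral
equation for `k1`. -/
theorem k1_integral_equation_exists_unique
    (T α1 α2 σ11 σ12 σ21 σ22 : ℝ) (hT : 0 < T)
    (hΔ : 0 < (σ11 - σ21) ^ 2 + (σ12 - σ22) ^ 2) :
    ∃ k1 : ℝ → ℝ,
      (ContinuousOn k1 (Set.Icc 0 T) ∧
        ∀ t ∈ Set.Icc (0 : ℝ) T, k1 t = k1RHS T α1 α2 σ11 σ12 σ21 σ22 k1 t) ∧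
      ∀ l : ℝ → ℝ,
        ContinuousOn l (Set.Icc 0 T) →
        (∀ t ∈ Set.Icc (0 : ℝ) T, l t = k1RHS T α1 α2 σ11 σ12 σ21 σ22 l t) →
        Set.EqOn l k1 (Set.Icc 0 T) := by
  classical
  have hT0 : (0:ℝ) ≤ T := hT.le
  have hΔ' : 0 < K1Aux.Δ σ11 σ12 σ21 σ22 := hΔ
  set Φ := K1Aux.PhiS T α1 α2 σ11 σ12 σ21 σ22 hT0 hΔ' with hΦ
  haveI : CompleteSpace ↥(Sball T α1 α2 σ11 σ12 σ21 σ22) :=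
    IsClosed.completeSpace_coe (hs := Metric.isClosed_closedBall)
  haveI : Nonempty ↥(Sball T α1 α2 σ11 σ12 σ21 σ22) :=
    ⟨⟨0, by
      rw [mem_Sball_iff]
      intro x
      simpa using M_nonneg α1 α2 σ11 σ12 σ21 σ22⟩⟩
  obtain ⟨n, hn⟩ : ∃ n : ℕ,
      CC α1 α2 σ11 σ12 σ21 σ22 ^ n * T ^ n / n.factorial < 1 := by
    have h := FloorSemiring.tendsto_pow_div_factorial_atTop
      (K := ℝ) (CC α1 α2 σ11 σ12 σ21 σ22 * T)
    obtain ⟨n, hn⟩ := (h.eventually (gt_mem_nhds one_pos)).exists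
    rw [mul_pow] at hn
    exact ⟨n, hn⟩
  have hCC0 : 0 ≤ CC α1 α2 σ11 σ12 σ21 σ22 := CC_nonneg α1 α2 σ11 σ12 σ21 σ22
  set K : NNReal := ⟨CC α1 α2 σ11 σ12 σ21 σ22 ^ n * T ^ n / n.factorial, by positivity⟩
    with hK
  have hK1 : K < 1 := by
    rw [← NNReal.coe_lt_coe]
    exact_mod_cast hn
  have hlip : LipschitzWith K (Φ^[n]) := by
    apply LipschitzWith.of_dist_le_mul
    intro u v
    have hKD : (0:ℝ) ≤ (K : ℝ) * dist u v := by positivity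
    rw [Subtype.dist_eq, ContinuousMap.dist_le hKD]
    intro x
    rw [Real.dist_eq]
    refine le_trans (iter_est T α1 α2 σ11 σ12 σ21 σ22 hΔ' hT0 n u v x) ?_
    have hx1 : 0 ≤ T - (x:ℝ) := sub_nonneg.2 x.2.2
    have hx2 : T - (x:ℝ) ≤ T := by have := x.2.1; linarith
    show CC α1 α2 σ11 σ12 σ21 σ22 ^ n * (T - (x:ℝ)) ^ n / n.factorial * dist u v ≤
      CC α1 α2 σ11 σ12 σ21 σ22 ^ n * T ^ n / n.factorial * dist u v
    gcongr
  have hc : ContractingWith K (Φ^[n]) := ⟨hK1, hlip⟩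
  set z := ContractingWith.fixedPoint (Φ^[n]) hc with hz0
  have hz : Function.IsFixedPt (Φ^[n]) z := hc.fixedPoint_isFixedPt
  have hzfix : Φ z = z := by
    have h1 : Function.IsFixedPt (Φ^[n]) (Φ z) := by
      show Φ^[n] (Φ z) = Φ z
      rw [← Function.iterate_succ_apply, Function.iterate_succ_apply', hz]
    exact hc.fixedPoint_unique' h1 hz
  refine ⟨extIcc T hT0 z.1, ⟨(continuous_extIcc T hT0 z.1).continuousOn, ?_⟩, ?_⟩
  · intro t ht
    have h1 : (Φ z).1 ⟨t, ht⟩ = z.1 ⟨t, ht⟩ := by rw [hzfix]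
    have h2 : (Φ z).1 ⟨t, ht⟩ =
        k1RHS T α1 α2 σ11 σ12 σ21 σ22 (extIcc T hT0 z.1) t := rfl
    rw [extIcc_of_mem T hT0 z.1 ht, ← h1, h2]
  · intro l hlc hle
    have hulc : Continuous ((Set.Icc (0:ℝ) T).restrict l) := hlc.restrict
    set ul : C(Set.Icc (0:ℝ) T, ℝ) := ⟨(Set.Icc (0:ℝ) T).restrict l, hulc⟩ with hul
    have hmem : ul ∈ Sball T α1 α2 σ11 σ12 σ21 σ22 := by
      rw [mem_Sball_iff]
      intro x
      show |l x| ≤ _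
      rw [hle x x.2]
      exact rhs_bound T α1 α2 σ11 σ12 σ21 σ22 hΔ' l x.2.2
    have hfixl : Φ ⟨ul, hmem⟩ = ⟨ul, hmem⟩ := by
      apply Subtype.ext
      apply ContinuousMap.ext
      intro x
      show k1RHS T α1 α2 σ11 σ12 σ21 σ22 (extIcc T hT0 ul) x = l x
      have hcongr : (∫ s in (x:ℝ)..T, fQ σ11 σ12 σ21 σ22 (extIcc T hT0 ul s)) =
          ∫ s in (x:ℝ)..T, fQ σ11 σ12 σ21 σ22 (l s) := by
        apply intervalIntegral.integral_congr
        intro s hs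
        show fQ σ11 σ12 σ21 σ22 (extIcc T hT0 ul s) = fQ σ11 σ12 σ21 σ22 (l s)
        rw [Set.uIcc_of_le x.2.2] at hs
        have hmem2 : s ∈ Set.Icc (0:ℝ) T := ⟨le_trans x.2.1 hs.1, hs.2⟩
        rw [extIcc_of_mem T hT0 ul hmem2]
        rfl
      rw [k1RHS_eq, hcongr, ← k1RHS_eq]
      exact (hle x x.2).symm
    have hfixn : Function.IsFixedPt (Φ^[n]) ⟨ul, hmem⟩ :=
      Function.IsFixedPt.iterate hfixl n
    have heq : (⟨ul, hmem⟩ : ↥(Sball T α1 α2 σ11 σ12 σ21 σ22)) = z :=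
      hc.fixedPoint_unique' hfixn hz
    intro t ht
    have h3 := congrArg (fun w : ↥(Sball T α1 α2 σ11 σ12 σ21 σ22) =>
      (w.1 : C(Set.Icc (0:ℝ) T, ℝ)) ⟨t, ht⟩) heq
    simp only at h3
    show l t = extIcc T hT0 z.1 t
    rw [extIcc_of_mem T hT0 z.1 ht, ← h3]
    rfl
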